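/- Fix an integer m ≥ 2 and set ρ_j = 1/(4·cos²(jπ/(m+1))) for 1 ≤ j ≤ ⌊m/2⌋. Then, as polynomials over ℝ (viewing p_m with real coefficients), p_m(x) = ∏_{j=1}^{⌊m/2⌋} (1 − x/ρ_j); in particular the roots ρ_j of p_m are simple. Moreover 0 < ρ_1 < ρ_2 < ⋯ < ρ_{⌊m/2⌋}, so ρ_1 is the unique root of p_m of smallest modulus. -/

import Mathlib

/-- The Chebyshev-type polynomial sequence over `ℝ`: `p 0 = p 1 = 1`,
`p (r+2) = p (r+1) - X * p r`. -/
noncomputable def chebR : ℕ → Polynomial ℝ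
  | 0 => 1
  | 1 => 1
  | (r+2) => chebR (r+1) - Polynomial.X * chebR r

/-- `rho m j = 1/(4·cos²(jπ/(m+1)))`. -/
noncomputable def rho (m j : ℕ) : ℝ :=
  1 / (4 * Real.cos ((j : ℝ) * Real.pi / ((m : ℝ) + 1)) ^ 2)

open Polynomial Real

lemma chebR_eval_zero : ∀ r, (chebR r).eval 0 = 1 := by
  intro r
  induction r using Nat.twoStepInduction with
  | zero => simp [chebR]
  | one => simp [chebR]
  | more n ih1 ih2 => simp [chebR, ih1, ih2]

lemma chebR_ne_zero (r : ℕ) : chebR r ≠ 0 := fun h => by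
  have := chebR_eval_zero r; rw [h] at this; simp at this

lemma chebR_natDegree_le : ∀ r, (chebR r).natDegree ≤ r / 2 := by
  intro r
  induction r using Nat.twoStepInduction with
  | zero => simp [chebR]
  | one => simp [chebR]
  | more n ih1 ih2 =>
    show (chebR (n+1) - Polynomial.X * chebR n).natDegree ≤ (n+2)/2
    refine le_trans (Polynomial.natDegree_sub_le _ _) ?_
    have h2 : (Polynomial.X * chebR n).natDegree ≤ 1 + n / 2 :=
      le_trans (Polynomial.natDegree_mul_le) (by simpa using add_le_add_left ih1 1)
    have : (n+1)/2 ≤ (n+2)/2 := by omega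
    have : 1 + n/2 ≤ (n+2)/2 := by omega
    omega

lemma chebR_eval_trig (θ : ℝ) (hc : Real.cos θ ≠ 0) :
    ∀ r : ℕ, (chebR r).eval (1/(4 * Real.cos θ ^ 2)) * (Real.sin θ * (2 * Real.cos θ) ^ r)
      = Real.sin (((r : ℝ) + 1) * θ) := by
  intro r
  induction r using Nat.twoStepInduction with
  | zero => simp [chebR]
  | one =>
    simp only [chebR, Polynomial.eval_one, pow_one, Nat.cast_one]
    rw [show ((1:ℝ)+1)*θ = 2*θ by ring, Real.sin_two_mul]; ring
  | more n ih1 ih2 =>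
    have key : Real.sin (((n:ℝ)+2+1)*θ) + Real.sin (((n:ℝ)+1)*θ)
        = 2 * Real.cos θ * Real.sin (((n:ℝ)+1+1)*θ) := by
      have e1 : ((n:ℝ)+2+1)*θ = ((n:ℝ)+1+1)*θ + θ := by ring
      have e2 : ((n:ℝ)+1)*θ = ((n:ℝ)+1+1)*θ - θ := by ring
      rw [e1, e2, Real.sin_add, Real.sin_sub]; ring
    have hrec : (chebR (n+2)).eval (1/(4 * Real.cos θ ^ 2))
        = (chebR (n+1)).eval (1/(4 * Real.cos θ ^ 2))
          - (1/(4 * Real.cos θ ^ 2)) * (chebR n).eval (1/(4 * Real.cos θ ^ 2)) := by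
      simp [chebR]
    have hc2 : (4 : ℝ) * Real.cos θ ^ 2 ≠ 0 := by positivity
    have hx : 1/(4 * Real.cos θ ^ 2) * (2 * Real.cos θ)^(n+2) = (2 * Real.cos θ)^n := by
      field_simp; ring
    push_cast
    push_cast at ih1 ih2
    rw [hrec]
    set A := (chebR (n+1)).eval (1/(4 * Real.cos θ ^ 2)) with hA
    set B := (chebR n).eval (1/(4 * Real.cos θ ^ 2)) with hB
    have expand : (A - 1/(4 * Real.cos θ ^ 2) * B) * (Real.sin θ * (2 * Real.cos θ)^(n+2))
        = (A * (Real.sin θ * (2 * Real.cos θ)^(n+1))) * (2 * Real.cos θ)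
          - B * (Real.sin θ * (2 * Real.cos θ)^n) := by
      have h0 : (A - 1/(4 * Real.cos θ ^ 2) * B) * (Real.sin θ * (2 * Real.cos θ)^(n+2))
          = A * (Real.sin θ * (2 * Real.cos θ)^(n+1)) * (2 * Real.cos θ)
            - (1/(4 * Real.cos θ ^ 2) * (2 * Real.cos θ)^(n+2)) * (B * Real.sin θ) := by ring
      rw [h0, hx]; ring
    rw [expand, ih1, ih2]
    linarith [key]

lemma theta_bounds (m j : ℕ) (hm : 2 ≤ m) (hj1 : 1 ≤ j) (hj2 : j ≤ m / 2) :
    0 < (j : ℝ) * Real.pi / ((m : ℝ) + 1) ∧ (j : ℝ) * Real.pi / ((m : ℝ) + 1) < Real.pi / 2 := by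
  have hπ := Real.pi_pos
  have hm1 : (0:ℝ) < (m : ℝ) + 1 := by positivity
  have hj1' : (1:ℝ) ≤ (j : ℝ) := by exact_mod_cast hj1
  have h2j : (2 * j : ℕ) ≤ m := by omega
  have h2j' : 2 * (j : ℝ) ≤ (m : ℝ) := by exact_mod_cast h2j
  constructor
  · positivity
  · rw [div_lt_div_iff₀ hm1 (by norm_num : (0:ℝ) < 2)]
    nlinarith

lemma cos_theta_pos (m j : ℕ) (hm : 2 ≤ m) (hj1 : 1 ≤ j) (hj2 : j ≤ m / 2) :
    0 < Real.cos ((j : ℝ) * Real.pi / ((m : ℝ) + 1)) := by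
  obtain ⟨h1, h2⟩ := theta_bounds m j hm hj1 hj2
  exact Real.cos_pos_of_mem_Ioo ⟨by linarith [Real.pi_pos], h2⟩

lemma rho_pos' (m j : ℕ) (hm : 2 ≤ m) (hj1 : 1 ≤ j) (hj2 : j ≤ m / 2) :
    0 < rho m j := by
  have := cos_theta_pos m j hm hj1 hj2
  unfold rho; positivity

lemma rho_lt (m : ℕ) (hm : 2 ≤ m) {j k : ℕ} (hj1 : 1 ≤ j) (hjk : j < k) (hk : k ≤ m / 2) :
    rho m j < rho m k := by
  have hπ := Real.pi_pos
  have hm1 : (0:ℝ) < (m : ℝ) + 1 := by positivity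
  have hcj := cos_theta_pos m j hm hj1 (by omega)
  have hck := cos_theta_pos m k hm (by omega) hk
  obtain ⟨hθj, _⟩ := theta_bounds m j hm hj1 (by omega)
  obtain ⟨_, hθk⟩ := theta_bounds m k hm (by omega) hk
  have hjk' : (j : ℝ) < (k : ℝ) := by exact_mod_cast hjk
  have hθ : (j : ℝ) * Real.pi / ((m : ℝ) + 1) < (k : ℝ) * Real.pi / ((m : ℝ) + 1) := by
    gcongr
  have hcos : Real.cos ((k : ℝ) * Real.pi / ((m : ℝ) + 1))
      < Real.cos ((j : ℝ) * Real.pi / ((m : ℝ) + 1)) :=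
    Real.cos_lt_cos_of_nonneg_of_le_pi (le_of_lt hθj) (by linarith) hθ
  unfold rho
  apply one_div_lt_one_div_of_lt (by positivity) (by nlinarith)

lemma chebR_root (m j : ℕ) (hm : 2 ≤ m) (hj1 : 1 ≤ j) (hj2 : j ≤ m / 2) :
    (chebR m).IsRoot (rho m j) := by
  set θ : ℝ := (j : ℝ) * Real.pi / ((m : ℝ) + 1) with hθdef
  have hc := cos_theta_pos m j hm hj1 hj2
  obtain ⟨hθ1, hθ2⟩ := theta_bounds m j hm hj1 hj2
  have hs : 0 < Real.sin θ := Real.sin_pos_of_pos_of_lt_pi hθ1 (by linarith [Real.pi_pos])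
  have trig := chebR_eval_trig θ (ne_of_gt hc) m
  have hmul : ((m : ℝ) + 1) * θ = (j : ℝ) * Real.pi := by
    rw [hθdef]; field_simp
  have hz : Real.sin (((m : ℝ) + 1) * θ) = 0 := by
    rw [hmul]; exact_mod_cast Real.sin_nat_mul_pi j
  rw [hz] at trig
  have hne : Real.sin θ * (2 * Real.cos θ) ^ m ≠ 0 := by positivity
  have : (chebR m).eval (1 / (4 * Real.cos θ ^ 2)) = 0 := by
    rcases mul_eq_zero.mp trig with h | h
    · exact h
    · exact absurd h hne
  simpa [Polynomial.IsRoot, rho, hθdef] using this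

/-- fix `m ≥ 2` and set `ρ_j = 1/(4cos²(jπ/(m+1)))` for
`1 ≤ j ≤ ⌊m/2⌋`.  Then `p_m(x) = ∏_{j=1}^{⌊m/2⌋} (1 - x/ρ_j)` as real
polynomials; in particular each `ρ_j` is a simple root of `p_m`.
Moreover `0 < ρ_1 < ρ_2 < ⋯ < ρ_{⌊m/2⌋}`, so `ρ_1` is the unique root of
`p_m` of smallest modulus. -/
theorem statement9 (m : ℕ) (hm : 2 ≤ m) :
    (chebR m = ∏ j ∈ Finset.Icc 1 (m / 2),
        (1 - Polynomial.C (rho m j)⁻¹ * Polynomial.X)) ∧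
    (∀ j ∈ Finset.Icc 1 (m / 2), (chebR m).rootMultiplicity (rho m j) = 1) ∧
    (∀ j ∈ Finset.Icc 1 (m / 2), 0 < rho m j) ∧
    (∀ j k : ℕ, 1 ≤ j → j < k → k ≤ m / 2 → rho m j < rho m k) ∧
    (∀ x : ℝ, (chebR m).IsRoot x → x = rho m 1 ∨ |rho m 1| < |x|) := by
  classical
  set s : Finset ℕ := Finset.Icc 1 (m / 2) with hs
  have hmem : ∀ j ∈ s, 1 ≤ j ∧ j ≤ m / 2 := fun j hj => by
    rw [hs, Finset.mem_Icc] at hj; exact hj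
  have hinj : Set.InjOn (rho m) s := by
    intro a ha b hb hab
    obtain ⟨ha1, ha2⟩ := hmem a ha
    obtain ⟨hb1, hb2⟩ := hmem b hb
    by_contra hne
    rcases Nat.lt_or_ge a b with h | h
    · exact absurd hab (ne_of_lt (rho_lt m hm ha1 h hb2))
    · have : b < a := by omega
      exact absurd hab.symm (ne_of_lt (rho_lt m hm hb1 this ha2))
  set t : Finset ℝ := s.image (rho m) with ht
  have htcard : t.card = m / 2 := by
    rw [ht, Finset.card_image_of_injOn hinj, hs, Nat.card_Icc]; omega
  have hsub : t.val ≤ (chebR m).roots := by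
    rw [Multiset.le_iff_subset t.nodup]
    intro x hx
    obtain ⟨j, hj, rfl⟩ := Finset.mem_image.mp (Finset.mem_val.mp hx)
    obtain ⟨hj1, hj2⟩ := hmem j hj
    rw [Polynomial.mem_roots (chebR_ne_zero m)]
    exact chebR_root m j hm hj1 hj2
  set q : Polynomial ℝ := (t.val.map fun a => Polynomial.X - Polynomial.C a).prod with hq
  have hqmonic : q.Monic :=
    Polynomial.monic_multiset_prod_of_monic _ _ fun a _ => Polynomial.monic_X_sub_C a
  have hqdeg : q.natDegree = m / 2 := by
    rw [hq, Polynomial.natDegree_multiset_prod_X_sub_C_eq_card]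
    simpa using htcard
  obtain ⟨r, hr⟩ := (Multiset.prod_X_sub_C_dvd_iff_le_roots (chebR_ne_zero m) _).2 hsub
  have hr0 : r ≠ 0 := by
    rintro rfl; rw [mul_zero] at hr; exact chebR_ne_zero m hr
  have hdegr : r.natDegree = 0 := by
    have h1 := chebR_natDegree_le m
    rw [hr, Polynomial.natDegree_mul hqmonic.ne_zero hr0, hqdeg] at h1
    omega
  have hrC : r = Polynomial.C (r.coeff 0) := Polynomial.eq_C_of_natDegree_eq_zero hdegr
  set c : ℝ := r.coeff 0 with hcdef
  have hfact : chebR m = q * Polynomial.C c := by rw [hr, ← hrC]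
  -- q as a Finset product over s
  have hqprod : q = ∏ j ∈ s, (Polynomial.X - Polynomial.C (rho m j)) := by
    rw [hq, ht]
    exact Finset.prod_image (fun a ha b hb h => hinj ha hb h)
  have hρpos : ∀ j ∈ s, 0 < rho m j := fun j hj =>
    rho_pos' m j hm (hmem j hj).1 (hmem j hj).2
  -- evaluate at 0
  have heval0 : (1 : ℝ) = (∏ j ∈ s, (-(rho m j))) * c := by
    have := chebR_eval_zero m
    rw [hfact, hqprod] at this
    simp [Polynomial.eval_prod] at this
    linarith [this]
  have hprodne : (∏ j ∈ s, (-(rho m j))) ≠ 0 :=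
    Finset.prod_ne_zero_iff.mpr fun j hj => neg_ne_zero.mpr (ne_of_gt (hρpos j hj))
  have hcval : c = ∏ j ∈ s, (-(rho m j)⁻¹) := by
    have h1 : c = (∏ j ∈ s, (-(rho m j)))⁻¹ := by
      field_simp at heval0 ⊢
      linarith [heval0]
    rw [h1, ← Finset.prod_inv_distrib]
    exact Finset.prod_congr rfl fun j hj => by rw [inv_neg]
  have hc0 : c ≠ 0 := by
    rw [hcval]
    exact Finset.prod_ne_zero_iff.mpr fun j hj =>
      neg_ne_zero.mpr (inv_ne_zero (ne_of_gt (hρpos j hj)))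
  -- main product identity
  have hmain : chebR m = ∏ j ∈ s, (1 - Polynomial.C (rho m j)⁻¹ * Polynomial.X) := by
    have hfac : ∀ j ∈ s, (1 : Polynomial ℝ) - Polynomial.C (rho m j)⁻¹ * Polynomial.X
        = Polynomial.C (-(rho m j)⁻¹) * (Polynomial.X - Polynomial.C (rho m j)) := by
      intro j hj
      have hne : rho m j ≠ 0 := ne_of_gt (hρpos j hj)
      rw [mul_sub, ← Polynomial.C_mul, neg_mul, inv_mul_cancel₀ hne]
      simp
      ring
    rw [Finset.prod_congr rfl hfac, Finset.prod_mul_distrib, ← map_prod,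
      ← hcval, hfact, hqprod, mul_comm]
  -- roots of chebR m
  have hroots : (chebR m).roots = t.val := by
    rw [hfact, mul_comm, Polynomial.roots_C_mul _ hc0, hq,
      Polynomial.roots_multiset_prod_X_sub_C]
  refine ⟨hmain, ?_, hρpos, ?_, ?_⟩
  · intro j hj
    rw [← Polynomial.count_roots, hroots]
    exact Multiset.count_eq_one_of_mem t.nodup
      (Finset.mem_image.mpr ⟨j, hj, rfl⟩)
  · exact fun j k hj hjk hk => rho_lt m hm hj hjk hk
  · intro x hx
    have hxmem : x ∈ t := by
      have : x ∈ (chebR m).roots := (Polynomial.mem_roots (chebR_ne_zero m)).mpr hx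
      rwa [hroots] at this
    obtain ⟨j, hj, rfl⟩ := Finset.mem_image.mp hxmem
    obtain ⟨hj1, hj2⟩ := hmem j hj
    rcases eq_or_lt_of_le hj1 with h | h
    · left; rw [← h]
    · right
      have h1 : 1 ∈ s := by rw [hs, Finset.mem_Icc]; omega
      have hlt : rho m 1 < rho m j := rho_lt m hm le_rfl h hj2
      rw [abs_of_pos (hρpos 1 h1), abs_of_pos (hρpos j hj)]
      exact hlt
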